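/- (Dynamic regret of DOGD for Lipschitz quasar-convex losses.) In the DOGD setting described below, assume additionally that ‖∇f_t(x)‖ ≤ L for all x ∈ X and all t ∈ [T]. Then the dynamic regret of DOGD with constant step size η > 0 satisfies R^{NS}_T ≤ 2R²/(ηκ) + ((3R + ηL(d−1))/(ηκ)) V_T + ((L²d + 4(d−1)L²)/(2κ)) η T + (ηd/(2κ)) Λ_T + ((ηdL + 2R + 2η(d−1)L)/κ) Δ_T. -/

import Mathlib

open RealInnerProductSpace

/-- Projection onto a convex set decreases distances to points of the set. -/
lemma dogd_proj_sq_le {F : Type*} [NormedAddCommGroup F] [InnerProductSpace ℝ F]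
    {X : Set F} (hX : Convex ℝ X) {y xp u : F} (hxp : xp ∈ X) (hu : u ∈ X)
    (hmin : ∀ z ∈ X, ‖xp - y‖ ≤ ‖z - y‖) : ‖xp - u‖^2 ≤ ‖y - u‖^2 := by
  haveI : Nonempty X := ⟨⟨xp, hxp⟩⟩
  have hinf : ‖y - xp‖ = ⨅ w : X, ‖y - w‖ := by
    apply le_antisymm
    · apply le_ciInf
      intro w
      have := hmin w w.2
      rwa [norm_sub_rev xp y, norm_sub_rev (w : F) y] at this
    · exact ciInf_le ⟨0, fun _ ⟨_, h⟩ => h ▸ norm_nonneg _⟩ (⟨xp, hxp⟩ : X)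
  have hvi : ∀ w ∈ X, ⟪y - xp, w - xp⟫ ≤ 0 :=
    (norm_eq_iInf_iff_real_inner_le_zero hX hxp).mp hinf
  have h1 : ‖y - u‖^2 = ‖y - xp‖^2 + 2 * ⟪y - xp, xp - u⟫ + ‖xp - u‖^2 := by
    have : y - u = (y - xp) + (xp - u) := by abel
    rw [this, ← real_inner_self_eq_norm_sq, ← real_inner_self_eq_norm_sq,
      ← real_inner_self_eq_norm_sq]
    rw [inner_add_add_self, real_inner_comm (xp - u) (y - xp)]
    ring
  have h2 : ⟪y - xp, xp - u⟫ ≥ 0 := by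
    have := hvi u hu
    have heq : ⟪y - xp, xp - u⟫ = - ⟪y - xp, u - xp⟫ := by
      rw [← inner_neg_right]; congr 1; abel
    rw [heq]; linarith
  nlinarith [sq_nonneg ‖y - xp‖]

lemma dogd_norm_tele {F : Type*} [NormedAddCommGroup F] (v : ℕ → F) (a b : ℕ) (h : a ≤ b) :
    ‖v b - v a‖ ≤ ∑ j ∈ Finset.Ico a b, ‖v (j+1) - v j‖ := by
  induction b, h using Nat.le_induction with
  | base => simp
  | succ b hab ih =>
    rw [Finset.sum_Ico_succ_top hab]
    calc ‖v (b+1) - v a‖ ≤ ‖v b - v a‖ + ‖v (b+1) - v b‖ := by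
          have : v (b+1) - v a = (v b - v a) + (v (b+1) - v b) := by abel
          rw [this]; exact norm_add_le _ _
    _ ≤ _ := by linarith

lemma dogd_window_sum (c : ℕ → ℝ) (hc : ∀ j, 0 ≤ c j) (a b N D : ℕ) (w : ℕ → Finset ℕ)
    (hw : ∀ k ∈ Finset.Icc a b, w k ⊆ (Finset.Icc 1 N).filter (fun j => k ≤ j ∧ j < k + D)) :
    ∑ k ∈ Finset.Icc a b, ∑ j ∈ w k, c j ≤ (D : ℝ) * ∑ j ∈ Finset.Icc 1 N, c j := by
  calc ∑ k ∈ Finset.Icc a b, ∑ j ∈ w k, c j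
      ≤ ∑ k ∈ Finset.Icc a b, ∑ j ∈ (Finset.Icc 1 N).filter (fun j => k ≤ j ∧ j < k + D), c j := by
        apply Finset.sum_le_sum
        intro k hk
        exact Finset.sum_le_sum_of_subset_of_nonneg (hw k hk) (fun j _ _ => hc j)
    _ = ∑ k ∈ Finset.Icc a b, ∑ j ∈ Finset.Icc 1 N, if k ≤ j ∧ j < k + D then c j else 0 := by
        simp_rw [Finset.sum_filter]
    _ = ∑ j ∈ Finset.Icc 1 N, ∑ k ∈ Finset.Icc a b, if k ≤ j ∧ j < k + D then c j else 0 :=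
        Finset.sum_comm
    _ ≤ ∑ j ∈ Finset.Icc 1 N, (D : ℝ) * c j := by
        apply Finset.sum_le_sum
        intro j _
        rw [← Finset.sum_filter, Finset.sum_const]
        have hcard : ((Finset.Icc a b).filter (fun k => k ≤ j ∧ j < k + D)).card ≤ D := by
          have hsub : (Finset.Icc a b).filter (fun k => k ≤ j ∧ j < k + D) ⊆
              Finset.Icc (j + 1 - D) j := by
            intro k hk
            rw [Finset.mem_filter] at hk
            rw [Finset.mem_Icc]
            omega
          calc _ ≤ (Finset.Icc (j + 1 - D) j).card := Finset.card_le_card hsub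
            _ ≤ D := by rw [Nat.card_Icc]; omega
        calc ((Finset.Icc a b).filter (fun k => k ≤ j ∧ j < k + D)).card • c j
            = (((Finset.Icc a b).filter (fun k => k ≤ j ∧ j < k + D)).card : ℝ) * c j := by
              rw [nsmul_eq_mul]
          _ ≤ (D : ℝ) * c j := by
              apply mul_le_mul_of_nonneg_right _ (hc j)
              exact_mod_cast hcard
    _ = (D : ℝ) * ∑ j ∈ Finset.Icc 1 N, c j := by rw [Finset.mul_sum]

lemma dogd_tele (a : ℕ → ℝ) (n : ℕ) :
    ∑ t ∈ Finset.Icc 1 n, (a t - a (t+1)) = a 1 - a (n+1) := by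
  induction n with
  | zero => simp
  | succ n ih =>
    rw [Finset.sum_Icc_succ_top (by omega : 1 ≤ n + 1), ih]
    ring

set_option maxHeartbeats 1000000 in
lemma dogd_arith (R V Tr Δ Λ L D η κ : ℝ) (hR : 0 < R) (hη : 0 < η) (hκ : 0 < κ)
    (hD : 1 ≤ D) (hL : 0 ≤ L) (hV : 0 ≤ V) (hΔ : 0 ≤ Δ) (hΛ : 0 ≤ Λ) (hT : 0 ≤ Tr)
    (S1 S2 S3 S4 G2 : ℝ)
    (h1 : 2 * η * S1 ≤ 4 * R^2 + 4 * R * V + η^2 * G2)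
    (hG2 : G2 ≤ D * (L^2 * Tr + 2 * L * Δ + Λ))
    (h2 : S2 ≤ L * (D - 1) * V)
    (h3 : S3 ≤ η * (D - 1) * L * (L * Tr + Δ))
    (h4 : S4 ≤ 2 * R * Δ) :
    (1/κ) * (S1 + S2 + S3 + S4) ≤
      2 * R^2 / (η * κ)
      + ((3 * R + η * L * (D - 1)) / (η * κ)) * V
      + ((L^2 * D + 4 * (D - 1) * L^2) / (2 * κ)) * η * Tr
      + (η * D / (2 * κ)) * Λ
      + ((η * D * L + 2 * R + 2 * η * (D - 1) * L) / κ) * Δ := by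
  have hη' : η ≠ 0 := ne_of_gt hη
  have hκ' : κ ≠ 0 := ne_of_gt hκ
  have hS1 : S1 ≤ (4 * R^2 + 4 * R * V + η^2 * (D * (L^2 * Tr + 2 * L * Δ + Λ))) / (2 * η) := by
    rw [le_div_iff₀ (by positivity)]
    nlinarith [sq_nonneg η]
  have hB : S1 + S2 + S3 + S4 ≤
      (4 * R^2 + 4 * R * V + η^2 * (D * (L^2 * Tr + 2 * L * Δ + Λ))) / (2 * η)
      + L * (D - 1) * V + η * (D - 1) * L * (L * Tr + Δ) + 2 * R * Δ := by linarith
  have hmono : (1/κ) * (S1 + S2 + S3 + S4) ≤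
      (1/κ) * ((4 * R^2 + 4 * R * V + η^2 * (D * (L^2 * Tr + 2 * L * Δ + Λ))) / (2 * η)
      + L * (D - 1) * V + η * (D - 1) * L * (L * Tr + Δ) + 2 * R * Δ) :=
    mul_le_mul_of_nonneg_left hB (by positivity)
  refine hmono.trans ?_
  rw [← sub_nonneg]
  have key : 2 * R^2 / (η * κ)
      + ((3 * R + η * L * (D - 1)) / (η * κ)) * V
      + ((L^2 * D + 4 * (D - 1) * L^2) / (2 * κ)) * η * Tr
      + (η * D / (2 * κ)) * Λ
      + ((η * D * L + 2 * R + 2 * η * (D - 1) * L) / κ) * Δ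
      - (1/κ) * ((4 * R^2 + 4 * R * V + η^2 * (D * (L^2 * Tr + 2 * L * Δ + Λ))) / (2 * η)
      + L * (D - 1) * V + η * (D - 1) * L * (L * Tr + Δ) + 2 * R * Δ)
      = (1/κ) * ((R/η) * V + η * (D-1) * L^2 * Tr + η * (D-1) * L * Δ) := by
    field_simp
    ring
  rw [key]
  have hD1 : 0 ≤ D - 1 := by linarith
  have hnn : 0 ≤ (R/η) * V + η * (D-1) * L^2 * Tr + η * (D-1) * L * Δ := by
    have h1' : 0 ≤ (R/η) * V := by positivity
    have h2' : 0 ≤ η * (D-1) * L^2 * Tr :=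
      mul_nonneg (mul_nonneg (mul_nonneg hη.le hD1) (sq_nonneg L)) hT
    have h3' : 0 ≤ η * (D-1) * L * Δ :=
      mul_nonneg (mul_nonneg (mul_nonneg hη.le hD1) hL) hΔ
    linarith
  exact mul_nonneg (by positivity) hnn

set_option maxHeartbeats 1600000 in
/-- Dynamic regret bound for delayed online gradient descent (DOGD) with noisy
gradients on L-Lipschitz quasar-convex losses (Theorem 4.1(1)). -/
theorem dogd_dynamic_regret_lipschitz
    (p T : ℕ) (hT : 1 ≤ T)
    (X : Set (EuclideanSpace ℝ (Fin p)))
    (hXne : X.Nonempty) (hXclosed : IsClosed X) (hXconv : Convex ℝ X)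
    (R : ℝ) (hR : 0 < R) (hXR : ∀ z ∈ X, ‖z‖ ≤ R)
    -- loss functions and their minimizers over X
    (f : ℕ → EuclideanSpace ℝ (Fin p) → ℝ)
    (hfdiff : ∀ t ∈ Finset.Icc 1 T, Differentiable ℝ (f t))
    (xs : ℕ → EuclideanSpace ℝ (Fin p))
    (hxs : ∀ t ∈ Finset.Icc 1 T, xs t ∈ X ∧ ∀ z ∈ X, f t (xs t) ≤ f t z)
    -- quasar-convexity with respect to the minimizers
    (κ : ℝ) (hκ0 : 0 < κ) (hκ1 : κ ≤ 1)
    (hqc : ∀ t ∈ Finset.Icc 1 T, ∀ z ∈ X,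
      f t z + (1/κ) * ⟪gradient (f t) z, xs t - z⟫ ≤ f t (xs t))
    -- delays: d is the maximum delay
    (dl : ℕ → ℕ) (hdl : ∀ t ∈ Finset.Icc 1 T, 1 ≤ dl t)
    (d : ℕ) (hdub : ∀ t ∈ Finset.Icc 1 T, dl t ≤ d)
    (hdmem : ∃ t ∈ Finset.Icc 1 T, dl t = d)
    -- noisy gradient feedback r_t = ∇f_t(x_t) + m_t with ‖m_t‖ ≤ δ_t
    (mm : ℕ → EuclideanSpace ℝ (Fin p)) (δ : ℕ → ℝ)
    (hmm : ∀ t ∈ Finset.Icc 1 T, ‖mm t‖ ≤ δ t)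
    -- iterates with constant step size η: projected update using received gradients
    (x : ℕ → EuclideanSpace ℝ (Fin p))
    (η : ℝ) (hη : 0 < η)
    (hx1 : x 1 ∈ X)
    (hupd : ∀ t : ℕ, 1 ≤ t →
      (((Finset.Icc 1 T).filter fun k => k + dl k - 1 = t).Nonempty →
        x (t+1) ∈ X ∧ ∀ z ∈ X,
          ‖x (t+1) - (x t - η • ∑ k ∈ (Finset.Icc 1 T).filter
              (fun k => k + dl k - 1 = t), (gradient (f k) (x k) + mm k))‖ ≤
          ‖z - (x t - η • ∑ k ∈ (Finset.Icc 1 T).filter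
              (fun k => k + dl k - 1 = t), (gradient (f k) (x k) + mm k))‖) ∧
      (¬ ((Finset.Icc 1 T).filter fun k => k + dl k - 1 = t).Nonempty →
        x (t+1) = x t))
    -- Lipschitz gradients: ‖∇f_t‖ ≤ L on X
    (L : ℝ) (hL : ∀ t ∈ Finset.Icc 1 T, ∀ z ∈ X, ‖gradient (f t) z‖ ≤ L) :
    -- dynamic regret bound
    ∑ t ∈ Finset.Icc 1 T, (f t (x t) - f t (xs t)) ≤
      2 * R^2 / (η * κ)
      + ((3 * R + η * L * ((d : ℝ) - 1)) / (η * κ)) *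
          (∑ t ∈ Finset.Icc 1 (T - 1), ‖xs (t+1) - xs t‖)
      + ((L^2 * (d : ℝ) + 4 * ((d : ℝ) - 1) * L^2) / (2 * κ)) * η * (T : ℝ)
      + (η * (d : ℝ) / (2 * κ)) * (∑ t ∈ Finset.Icc 1 T, (δ t)^2)
      + ((η * (d : ℝ) * L + 2 * R + 2 * η * ((d : ℝ) - 1) * L) / κ) *
          (∑ t ∈ Finset.Icc 1 T, δ t) := by
  classical
  -- abbreviations
  set Fb : ℕ → Finset ℕ :=
    (fun t => (Finset.Icc 1 T).filter fun k => k + dl k - 1 = t) with hFb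
  set r : ℕ → EuclideanSpace ℝ (Fin p) :=
    (fun k => gradient (f k) (x k) + mm k) with hr
  set g : ℕ → EuclideanSpace ℝ (Fin p) := (fun t => ∑ k ∈ Fb t, r k) with hg
  set u : ℕ → EuclideanSpace ℝ (Fin p) := (fun t => xs (min t T)) with hu
  set V : ℝ := ∑ t ∈ Finset.Icc 1 (T - 1), ‖xs (t+1) - xs t‖ with hV
  set Δ : ℝ := ∑ t ∈ Finset.Icc 1 T, δ t with hΔ
  set Λ : ℝ := ∑ t ∈ Finset.Icc 1 T, (δ t)^2 with hΛ
  -- basic facts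
  have hd1 : 1 ≤ d := by
    obtain ⟨t, ht, hdt⟩ := hdmem
    exact hdt ▸ hdl t ht
  have h1T : (1:ℕ) ∈ Finset.Icc 1 T := by
    rw [Finset.mem_Icc]; omega
  have hL0 : 0 ≤ L := le_trans (norm_nonneg _) (hL 1 h1T (x 1) hx1)
  have hxX : ∀ t, 1 ≤ t → x t ∈ X := by
    intro t ht
    induction t, ht using Nat.le_induction with
    | base => exact hx1
    | succ n hn ih =>
      by_cases hne : ((Finset.Icc 1 T).filter fun k => k + dl k - 1 = n).Nonempty
      · exact ((hupd n hn).1 hne).1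
      · rw [(hupd n hn).2 hne]; exact ih
  have huX : ∀ t, 1 ≤ t → u t ∈ X := by
    intro t ht
    have : min t T ∈ Finset.Icc 1 T := by
      rw [Finset.mem_Icc]; omega
    exact (hxs (min t T) this).1
  have h2R : ∀ v ∈ X, ∀ w ∈ X, ‖v - w‖ ≤ 2 * R := by
    intro v hv w hw
    calc ‖v - w‖ ≤ ‖v‖ + ‖w‖ := norm_sub_le _ _
      _ ≤ 2 * R := by linarith [hXR v hv, hXR w hw]
  have hδ0 : ∀ k ∈ Finset.Icc 1 T, 0 ≤ δ k := fun k hk =>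
    le_trans (norm_nonneg _) (hmm k hk)
  have hrk : ∀ k ∈ Finset.Icc 1 T, ‖r k‖ ≤ L + δ k := by
    intro k hk
    have hk1 : 1 ≤ k := (Finset.mem_Icc.mp hk).1
    calc ‖r k‖ ≤ ‖gradient (f k) (x k)‖ + ‖mm k‖ := norm_add_le _ _
      _ ≤ L + δ k := add_le_add (hL k hk (x k) (hxX k hk1)) (hmm k hk)
  -- the step inequality from the projection
  have hstep : ∀ t, 1 ≤ t → ∀ w ∈ X,
      ‖x (t+1) - w‖^2 ≤ ‖x t - w‖^2 - 2*η*⟪g t, x t - w⟫ + η^2*‖g t‖^2 := by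
    intro t ht w hw
    have hexp : ‖(x t - η • g t) - w‖^2
        = ‖x t - w‖^2 - 2*(η*⟪g t, x t - w⟫) + η^2*‖g t‖^2 := by
      have h1 : (x t - η • g t) - w = (x t - w) - η • g t := by abel
      rw [h1, @norm_sub_sq_real, real_inner_smul_right, real_inner_comm, norm_smul]
      simp only [Real.norm_eq_abs, mul_pow, sq_abs]
    by_cases hne : ((Finset.Icc 1 T).filter fun k => k + dl k - 1 = t).Nonempty
    · obtain ⟨hxmem, hproj⟩ := (hupd t ht).1 hne
      have hproj' : ∀ z ∈ X, ‖x (t+1) - (x t - η • g t)‖ ≤ ‖z - (x t - η • g t)‖ := by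
        intro z hz
        have := hproj z hz
        simpa only [hg, hr, hFb] using this
      have hsq := dogd_proj_sq_le hXconv hxmem hw hproj'
      rw [hexp] at hsq
      linarith
    · have hgz : g t = 0 := by
        rw [hg]
        simp only [Finset.not_nonempty_iff_eq_empty] at hne
        simp [hFb, hne]
      rw [(hupd t ht).2 hne, hgz]
      simp
  have hmove : ∀ t, 1 ≤ t → ‖x (t+1) - x t‖ ≤ η * ‖g t‖ := by
    intro t ht
    have h := hstep t ht (x t) (hxX t ht)
    simp only [sub_self, norm_zero, inner_zero_right] at h
    have h' : ‖x (t+1) - x t‖^2 ≤ (η * ‖g t‖)^2 := by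
      rw [mul_pow]; nlinarith
    exact (pow_le_pow_iff_left₀ (norm_nonneg _) (by positivity) two_ne_zero).mp h'

  -- maps-to and fiberwise decomposition
  have hmaps : ∀ k ∈ Finset.Icc 1 T, k + dl k - 1 ∈ Finset.Icc 1 (T + d - 1) := by
    intro k hk
    have h1 := hdl k hk
    have h2 := hdub k hk
    rw [Finset.mem_Icc] at hk ⊢
    omega
  have hfib : ∀ (φ : ℕ → ℝ),
      ∑ t ∈ Finset.Icc 1 (T + d - 1), ∑ k ∈ Fb t, φ k = ∑ k ∈ Finset.Icc 1 T, φ k := by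
    intro φ
    simp only [hFb]
    exact Finset.sum_fiberwise_of_maps_to hmaps φ
  -- per-round key inequality with comparator drift
  have hkey : ∀ t ∈ Finset.Icc 1 (T + d - 1),
      2*η*⟪g t, x t - u t⟫ ≤
        (‖x t - u t‖^2 - ‖x (t+1) - u (t+1)‖^2) + 4*R*‖u (t+1) - u t‖ + η^2*‖g t‖^2 := by
    intro t htm
    have ht : 1 ≤ t := (Finset.mem_Icc.mp htm).1
    have h1 := hstep t ht (u t) (huX t ht)
    have hb : ‖x (t+1) - u (t+1)‖^2 ≤ ‖x (t+1) - u t‖^2 + 4*R*‖u (t+1) - u t‖ := by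
      have hv : x (t+1) - u t = (x (t+1) - u (t+1)) + (u (t+1) - u t) := by abel
      have hexp : ‖x (t+1) - u t‖^2 = ‖x (t+1) - u (t+1)‖^2
          + 2*⟪x (t+1) - u (t+1), u (t+1) - u t⟫ + ‖u (t+1) - u t‖^2 := by
        rw [hv, @norm_add_sq_real]
      have hcs := abs_real_inner_le_norm (x (t+1) - u (t+1)) (u (t+1) - u t)
      have hb1 : ‖x (t+1) - u (t+1)‖ ≤ 2*R :=
        h2R _ (hxX (t+1) (by omega)) _ (huX (t+1) (by omega))
      have hprod : ‖x (t+1) - u (t+1)‖ * ‖u (t+1) - u t‖ ≤ 2*R*‖u (t+1) - u t‖ :=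
        mul_le_mul_of_nonneg_right hb1 (norm_nonneg _)
      have hlow := neg_abs_le ⟪x (t+1) - u (t+1), u (t+1) - u t⟫
      nlinarith [sq_nonneg ‖u (t+1) - u t‖]
    linarith
  -- summed master inequality
  have hsum1 : 2*η*(∑ t ∈ Finset.Icc 1 (T + d - 1), ⟪g t, x t - u t⟫) ≤
      4*R^2 + 4*R*V + η^2*(∑ t ∈ Finset.Icc 1 (T + d - 1), ‖g t‖^2) := by
    have hs := Finset.sum_le_sum hkey
    rw [← Finset.mul_sum, Finset.sum_add_distrib, Finset.sum_add_distrib,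
      dogd_tele (fun t => ‖x t - u t‖^2) (T + d - 1), ← Finset.mul_sum,
      ← Finset.mul_sum] at hs
    have hA1b : ‖x 1 - u 1‖^2 ≤ 4*R^2 := by
      have hle : ‖x 1 - u 1‖ ≤ 2*R := h2R _ hx1 _ (huX 1 le_rfl)
      nlinarith [norm_nonneg (x 1 - u 1)]
    have hA2 : (0:ℝ) ≤ ‖x (T + d - 1 + 1) - u (T + d - 1 + 1)‖^2 := sq_nonneg _
    have hdrift : ∑ t ∈ Finset.Icc 1 (T + d - 1), ‖u (t+1) - u t‖ = V := by
      rw [hV]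
      have hsub : Finset.Icc 1 (T-1) ⊆ Finset.Icc 1 (T + d - 1) :=
        Finset.Icc_subset_Icc le_rfl (by omega)
      rw [← Finset.sum_subset hsub ?_]
      · apply Finset.sum_congr rfl
        intro t htm
        rw [Finset.mem_Icc] at htm
        simp only [hu]
        rw [min_eq_left (by omega : t + 1 ≤ T), min_eq_left (by omega : t ≤ T)]
      · intro t htm hnotm
        rw [Finset.mem_Icc] at htm
        rw [Finset.mem_Icc] at hnotm
        simp only [hu]
        rw [min_eq_right (by omega : T ≤ t + 1), min_eq_right (by omega : T ≤ t)]
        simp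
    rw [hdrift] at hs
    linarith
  -- reindex the gradient sum along arrival times
  have hS1eq : ∑ t ∈ Finset.Icc 1 (T + d - 1), ⟪g t, x t - u t⟫ =
      ∑ k ∈ Finset.Icc 1 T, ⟪r k, x (k + dl k - 1) - u (k + dl k - 1)⟫ := by
    rw [← hfib (fun k => ⟪r k, x (k + dl k - 1) - u (k + dl k - 1)⟫)]
    apply Finset.sum_congr rfl
    intro t _
    simp only [hg]
    rw [sum_inner]
    apply Finset.sum_congr rfl
    intro k hk
    have hkt : k + dl k - 1 = t := by
      simp only [hFb, Finset.mem_filter] at hk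
      exact hk.2
    rw [hkt]
  -- bound on the sum of squared aggregated gradients
  have hG2b : ∑ t ∈ Finset.Icc 1 (T + d - 1), ‖g t‖^2 ≤
      (d:ℝ) * (L^2 * (T:ℝ) + 2*L*Δ + Λ) := by
    have hpert : ∀ t ∈ Finset.Icc 1 (T + d - 1),
        ‖g t‖^2 ≤ (d:ℝ) * ∑ k ∈ Fb t, ‖r k‖^2 := by
      intro t _
      have hn : ‖g t‖ ≤ ∑ k ∈ Fb t, ‖r k‖ := by
        simp only [hg]; exact norm_sum_le _ _
      have hsq : ‖g t‖^2 ≤ (∑ k ∈ Fb t, ‖r k‖)^2 := pow_le_pow_left₀ (norm_nonneg _) hn 2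
      have hcs : (∑ k ∈ Fb t, ‖r k‖)^2 ≤ ((Fb t).card : ℝ) * ∑ k ∈ Fb t, ‖r k‖^2 :=
        sq_sum_le_card_mul_sum_sq
      have hcard : (Fb t).card ≤ d := by
        have hsub : Fb t ⊆ Finset.Icc (t+1-d) t := by
          intro k hk
          simp only [hFb, Finset.mem_filter] at hk
          have hkm := hk.1
          have h1 := hdl k hkm
          have h2 := hdub k hkm
          rw [Finset.mem_Icc] at hkm ⊢
          omega
        calc (Fb t).card ≤ (Finset.Icc (t+1-d) t).card := Finset.card_le_card hsub
          _ ≤ d := by rw [Nat.card_Icc]; omega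
      have hnn : (0:ℝ) ≤ ∑ k ∈ Fb t, ‖r k‖^2 := Finset.sum_nonneg fun k _ => sq_nonneg _
      calc ‖g t‖^2 ≤ ((Fb t).card : ℝ) * ∑ k ∈ Fb t, ‖r k‖^2 := le_trans hsq hcs
        _ ≤ (d:ℝ) * ∑ k ∈ Fb t, ‖r k‖^2 :=
            mul_le_mul_of_nonneg_right (by exact_mod_cast hcard) hnn
    calc ∑ t ∈ Finset.Icc 1 (T + d - 1), ‖g t‖^2
        ≤ ∑ t ∈ Finset.Icc 1 (T + d - 1), (d:ℝ) * ∑ k ∈ Fb t, ‖r k‖^2 :=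
          Finset.sum_le_sum hpert
      _ = (d:ℝ) * ∑ t ∈ Finset.Icc 1 (T + d - 1), ∑ k ∈ Fb t, ‖r k‖^2 := by
          rw [Finset.mul_sum]
      _ = (d:ℝ) * ∑ k ∈ Finset.Icc 1 T, ‖r k‖^2 := by rw [hfib]
      _ ≤ (d:ℝ) * ∑ k ∈ Finset.Icc 1 T, (L + δ k)^2 := by
          apply mul_le_mul_of_nonneg_left _ (by positivity)
          exact Finset.sum_le_sum fun k hk => pow_le_pow_left₀ (norm_nonneg _) (hrk k hk) 2
      _ = (d:ℝ) * (L^2 * (T:ℝ) + 2*L*Δ + Λ) := by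
          congr 1
          rw [hΔ, hΛ]
          calc ∑ k ∈ Finset.Icc 1 T, (L + δ k)^2
              = ∑ k ∈ Finset.Icc 1 T, (L^2 + (2*L*δ k + δ k^2)) :=
                Finset.sum_congr rfl fun k _ => by ring
            _ = ∑ k ∈ Finset.Icc 1 T, L^2
                + (∑ k ∈ Finset.Icc 1 T, 2*L*δ k + ∑ k ∈ Finset.Icc 1 T, δ k^2) := by
                rw [Finset.sum_add_distrib, Finset.sum_add_distrib]
            _ = L^2 * (T:ℝ) + 2*L*(∑ k ∈ Finset.Icc 1 T, δ k)
                + ∑ k ∈ Finset.Icc 1 T, δ k^2 := by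
                rw [Finset.sum_const, Nat.card_Icc, nsmul_eq_mul]
                have h2L : ∑ k ∈ Finset.Icc 1 T, 2*L*δ k
                    = 2*L*(∑ k ∈ Finset.Icc 1 T, δ k) := by rw [Finset.mul_sum]
                rw [h2L]
                have : ((T + 1 - 1 : ℕ) : ℝ) = (T:ℝ) := by norm_num
                rw [this]
                ring
            _ = L^2 * (T:ℝ) + 2*L*(∑ k ∈ Finset.Icc 1 T, δ k)
                + ∑ k ∈ Finset.Icc 1 T, δ k^2 := rfl
  -- bound on the sum of aggregated gradient norms
  have hG1 : ∑ t ∈ Finset.Icc 1 (T + d - 1), ‖g t‖ ≤ L * (T:ℝ) + Δ := by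
    calc ∑ t ∈ Finset.Icc 1 (T + d - 1), ‖g t‖
        ≤ ∑ t ∈ Finset.Icc 1 (T + d - 1), ∑ k ∈ Fb t, ‖r k‖ :=
          Finset.sum_le_sum fun t _ => by simp only [hg]; exact norm_sum_le _ _
      _ = ∑ k ∈ Finset.Icc 1 T, ‖r k‖ := hfib _
      _ ≤ ∑ k ∈ Finset.Icc 1 T, (L + δ k) := Finset.sum_le_sum hrk
      _ = L * (T:ℝ) + Δ := by
          rw [hΔ, Finset.sum_add_distrib, Finset.sum_const, Nat.card_Icc, nsmul_eq_mul]
          have : ((T + 1 - 1 : ℕ) : ℝ) = (T:ℝ) := by norm_num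
          rw [this]
          ring
  -- movement of the iterates
  have hmv : ∑ j ∈ Finset.Icc 1 (T + d - 1), ‖x (j+1) - x j‖ ≤ η * (L * (T:ℝ) + Δ) := by
    calc ∑ j ∈ Finset.Icc 1 (T + d - 1), ‖x (j+1) - x j‖
        ≤ ∑ j ∈ Finset.Icc 1 (T + d - 1), η * ‖g j‖ :=
          Finset.sum_le_sum fun j hj => hmove j (Finset.mem_Icc.mp hj).1
      _ = η * ∑ j ∈ Finset.Icc 1 (T + d - 1), ‖g j‖ := by rw [Finset.mul_sum]
      _ ≤ η * (L * (T:ℝ) + Δ) := mul_le_mul_of_nonneg_left hG1 hη.le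
  -- S2 : comparator drift term
  have hS2 : ∑ k ∈ Finset.Icc 1 T, ⟪gradient (f k) (x k), u (k + dl k - 1) - xs k⟫
      ≤ L * (((d - 1 : ℕ) : ℝ) * V) := by
    calc ∑ k ∈ Finset.Icc 1 T, ⟪gradient (f k) (x k), u (k + dl k - 1) - xs k⟫
        ≤ ∑ k ∈ Finset.Icc 1 T, L * ‖u (k + dl k - 1) - xs k‖ := by
          apply Finset.sum_le_sum
          intro k hk
          have hk1 : 1 ≤ k := (Finset.mem_Icc.mp hk).1
          have hi := real_inner_le_norm (gradient (f k) (x k)) (u (k + dl k - 1) - xs k)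
          have h2 := mul_le_mul_of_nonneg_right (hL k hk (x k) (hxX k hk1))
            (norm_nonneg (u (k + dl k - 1) - xs k))
          linarith
      _ ≤ ∑ k ∈ Finset.Icc 1 T,
            L * ∑ j ∈ Finset.Ico k (min (k + dl k - 1) T), ‖xs (j+1) - xs j‖ := by
          apply Finset.sum_le_sum
          intro k hk
          apply mul_le_mul_of_nonneg_left _ hL0
          have hk' := Finset.mem_Icc.mp hk
          have hdk := hdl k hk
          have hle : k ≤ min (k + dl k - 1) T := le_min (by omega) hk'.2
          have := dogd_norm_tele xs k (min (k + dl k - 1) T) hle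
          simp only [hu]
          exact this
      _ = L * ∑ k ∈ Finset.Icc 1 T,
            ∑ j ∈ Finset.Ico k (min (k + dl k - 1) T), ‖xs (j+1) - xs j‖ := by
          rw [Finset.mul_sum]
      _ ≤ L * (((d - 1 : ℕ) : ℝ) * V) := by
          apply mul_le_mul_of_nonneg_left _ hL0
          rw [hV]
          apply dogd_window_sum _ (fun j => norm_nonneg _) 1 T (T-1) (d-1)
          intro k hk j hj
          rw [Finset.mem_Ico] at hj
          have hj1 : j < k + dl k - 1 := lt_of_lt_of_le hj.2 (min_le_left _ _)
          have hj2 : j < T := lt_of_lt_of_le hj.2 (min_le_right _ _)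
          have hdk := hdl k hk
          have hdk2 := hdub k hk
          have hk' := Finset.mem_Icc.mp hk
          rw [Finset.mem_filter, Finset.mem_Icc]
          omega
  -- S3 : iterate movement term
  have hS3 : ∑ k ∈ Finset.Icc 1 T, ⟪gradient (f k) (x k), x k - x (k + dl k - 1)⟫
      ≤ L * (((d - 1 : ℕ) : ℝ) * (η * (L * (T:ℝ) + Δ))) := by
    calc ∑ k ∈ Finset.Icc 1 T, ⟪gradient (f k) (x k), x k - x (k + dl k - 1)⟫
        ≤ ∑ k ∈ Finset.Icc 1 T, L * ‖x k - x (k + dl k - 1)‖ := by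
          apply Finset.sum_le_sum
          intro k hk
          have hk1 : 1 ≤ k := (Finset.mem_Icc.mp hk).1
          have hi := real_inner_le_norm (gradient (f k) (x k)) (x k - x (k + dl k - 1))
          have h2 := mul_le_mul_of_nonneg_right (hL k hk (x k) (hxX k hk1))
            (norm_nonneg (x k - x (k + dl k - 1)))
          linarith
      _ ≤ ∑ k ∈ Finset.Icc 1 T,
            L * ∑ j ∈ Finset.Ico k (k + dl k - 1), ‖x (j+1) - x j‖ := by
          apply Finset.sum_le_sum
          intro k hk
          apply mul_le_mul_of_nonneg_left _ hL0
          have hdk := hdl k hk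
          rw [norm_sub_rev]
          exact dogd_norm_tele x k (k + dl k - 1) (by omega)
      _ = L * ∑ k ∈ Finset.Icc 1 T,
            ∑ j ∈ Finset.Ico k (k + dl k - 1), ‖x (j+1) - x j‖ := by rw [Finset.mul_sum]
      _ ≤ L * (((d - 1 : ℕ) : ℝ) * ∑ j ∈ Finset.Icc 1 (T + d - 1), ‖x (j+1) - x j‖) := by
          apply mul_le_mul_of_nonneg_left _ hL0
          apply dogd_window_sum _ (fun j => norm_nonneg _) 1 T (T + d - 1) (d-1)
          intro k hk j hj
          rw [Finset.mem_Ico] at hj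
          have hdk := hdl k hk
          have hdk2 := hdub k hk
          have hk' := Finset.mem_Icc.mp hk
          rw [Finset.mem_filter, Finset.mem_Icc]
          omega
      _ ≤ L * (((d - 1 : ℕ) : ℝ) * (η * (L * (T:ℝ) + Δ))) := by
          apply mul_le_mul_of_nonneg_left _ hL0
          exact mul_le_mul_of_nonneg_left hmv (by positivity)
  -- S4 : noise term
  have hS4 : ∑ k ∈ Finset.Icc 1 T, ⟪mm k, u (k + dl k - 1) - x (k + dl k - 1)⟫
      ≤ 2*R*Δ := by
    calc ∑ k ∈ Finset.Icc 1 T, ⟪mm k, u (k + dl k - 1) - x (k + dl k - 1)⟫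
        ≤ ∑ k ∈ Finset.Icc 1 T, δ k * (2*R) := by
          apply Finset.sum_le_sum
          intro k hk
          have hdk := hdl k hk
          have hk' := Finset.mem_Icc.mp hk
          have hsk1 : 1 ≤ k + dl k - 1 := by omega
          have hi := real_inner_le_norm (mm k) (u (k + dl k - 1) - x (k + dl k - 1))
          have hnb : ‖u (k + dl k - 1) - x (k + dl k - 1)‖ ≤ 2*R :=
            h2R _ (huX _ hsk1) _ (hxX _ hsk1)
          have := mul_le_mul (hmm k hk) hnb (norm_nonneg _) (hδ0 k hk)
          linarith
      _ = 2*R*Δ := by rw [hΔ, ← Finset.sum_mul]; ring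
  -- per-round regret decomposition
  have hreg : ∀ k ∈ Finset.Icc 1 T, f k (x k) - f k (xs k) ≤
      (1/κ) * (⟪r k, x (k + dl k - 1) - u (k + dl k - 1)⟫
        + ⟪gradient (f k) (x k), u (k + dl k - 1) - xs k⟫
        + ⟪gradient (f k) (x k), x k - x (k + dl k - 1)⟫
        + ⟪mm k, u (k + dl k - 1) - x (k + dl k - 1)⟫) := by
    intro k hk
    have hk1 : 1 ≤ k := (Finset.mem_Icc.mp hk).1
    have hq := hqc k hk (x k) (hxX k hk1)
    have hflip : ⟪gradient (f k) (x k), xs k - x k⟫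
        = -⟪gradient (f k) (x k), x k - xs k⟫ := by
      rw [← inner_neg_right]; congr 1; abel
    rw [hflip, mul_neg] at hq
    have hdecomp : ⟪gradient (f k) (x k), x k - xs k⟫
        = ⟪r k, x (k + dl k - 1) - u (k + dl k - 1)⟫
          + ⟪gradient (f k) (x k), u (k + dl k - 1) - xs k⟫
          + ⟪gradient (f k) (x k), x k - x (k + dl k - 1)⟫
          + ⟪mm k, u (k + dl k - 1) - x (k + dl k - 1)⟫ := by
      simp only [hr, inner_add_left, inner_sub_right]
      ring
    rw [← hdecomp]
    linarith
  -- assemble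
  have hsplit : ∑ t ∈ Finset.Icc 1 T, (f t (x t) - f t (xs t)) ≤
      (1/κ) * ((∑ k ∈ Finset.Icc 1 T, ⟪r k, x (k + dl k - 1) - u (k + dl k - 1)⟫)
        + (∑ k ∈ Finset.Icc 1 T, ⟪gradient (f k) (x k), u (k + dl k - 1) - xs k⟫)
        + (∑ k ∈ Finset.Icc 1 T, ⟪gradient (f k) (x k), x k - x (k + dl k - 1)⟫)
        + (∑ k ∈ Finset.Icc 1 T, ⟪mm k, u (k + dl k - 1) - x (k + dl k - 1)⟫)) := by
    calc ∑ t ∈ Finset.Icc 1 T, (f t (x t) - f t (xs t))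
        ≤ ∑ k ∈ Finset.Icc 1 T, (1/κ) * (⟪r k, x (k + dl k - 1) - u (k + dl k - 1)⟫
          + ⟪gradient (f k) (x k), u (k + dl k - 1) - xs k⟫
          + ⟪gradient (f k) (x k), x k - x (k + dl k - 1)⟫
          + ⟪mm k, u (k + dl k - 1) - x (k + dl k - 1)⟫) := Finset.sum_le_sum hreg
      _ = _ := by
          rw [← Finset.mul_sum]
          congr 1
          rw [Finset.sum_add_distrib, Finset.sum_add_distrib, Finset.sum_add_distrib]
  refine hsplit.trans ?_
  have hdcast : ((d - 1 : ℕ) : ℝ) = (d:ℝ) - 1 := by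
    rw [Nat.cast_sub hd1, Nat.cast_one]
  have hV0 : 0 ≤ V := by rw [hV]; exact Finset.sum_nonneg fun _ _ => norm_nonneg _
  have hΔ0 : 0 ≤ Δ := by rw [hΔ]; exact Finset.sum_nonneg hδ0
  have hΛ0 : 0 ≤ Λ := by rw [hΛ]; exact Finset.sum_nonneg fun _ _ => sq_nonneg _
  have h1' : 2 * η * (∑ k ∈ Finset.Icc 1 T, ⟪r k, x (k + dl k - 1) - u (k + dl k - 1)⟫)
      ≤ 4 * R^2 + 4 * R * V + η^2 * (∑ t ∈ Finset.Icc 1 (T + d - 1), ‖g t‖^2) := by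
    rw [← hS1eq]
    exact hsum1
  have h2' : (∑ k ∈ Finset.Icc 1 T, ⟪gradient (f k) (x k), u (k + dl k - 1) - xs k⟫)
      ≤ L * ((d:ℝ) - 1) * V := by
    calc _ ≤ L * (((d - 1 : ℕ) : ℝ) * V) := hS2
      _ = L * ((d:ℝ) - 1) * V := by rw [hdcast]; ring
  have h3' : (∑ k ∈ Finset.Icc 1 T, ⟪gradient (f k) (x k), x k - x (k + dl k - 1)⟫)
      ≤ η * ((d:ℝ) - 1) * L * (L * (T:ℝ) + Δ) := by
    calc _ ≤ L * (((d - 1 : ℕ) : ℝ) * (η * (L * (T:ℝ) + Δ))) := hS3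
      _ = η * ((d:ℝ) - 1) * L * (L * (T:ℝ) + Δ) := by rw [hdcast]; ring
  exact dogd_arith R V (T:ℝ) Δ Λ L (d:ℝ) η κ hR hη hκ0
    (by exact_mod_cast hd1) hL0 hV0 hΔ0 hΛ0 (Nat.cast_nonneg T)
    _ _ _ _ _ h1' hG2b h2' h3' hS4
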